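/- Let c* > 1 be such that f_{c*}(k) ≤ 0 for all k and f_{c*}(k₀) = 0 for some k₀ > 0. Then any such k₀ satisfies 0 < k₀ < π. -/

import Mathlib

open Real in
theorem stmt_6 (cs k₀ : ℝ) (hcs : 1 < cs)
    (hle : ∀ k : ℝ, -cs^2 * k^2 + 8 - 10 * Real.cos k + 2 * Real.cos (2*k) ≤ 0)
    (hk₀ : 0 < k₀)
    (hroot : -cs^2 * k₀^2 + 8 - 10 * Real.cos k₀ + 2 * Real.cos (2*k₀) = 0) :
    k₀ < π := by
  have hpi := Real.pi_gt_three
  have hcs2 : (1:ℝ) < cs^2 := by nlinarith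
  have hc1 : Real.cos k₀ ≥ -1 := Real.neg_one_le_cos k₀
  have hc2 : Real.cos (2*k₀) ≤ 1 := Real.cos_le_one _
  have hk2pi : k₀ < 2*π := by nlinarith [sq_nonneg k₀]
  by_contra hcon
  push_neg at hcon
  rcases hcon.lt_or_eq with hlt | heq
  · -- π < k₀ : reflection argument
    have hrefl := hle (2*π - k₀)
    have e1 : Real.cos (2*π - k₀) = Real.cos k₀ := by
      rw [Real.cos_sub]; simp
    have e2 : Real.cos (2*(2*π - k₀)) = Real.cos (2*k₀) := by
      have h' : 2*(2*π - k₀) = -(2*k₀) + 2*π + 2*π := by ring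
      rw [h', Real.cos_add_two_pi, Real.cos_add_two_pi, Real.cos_neg]
    rw [e1, e2] at hrefl
    have hA : cs^2 * k₀^2 ≤ cs^2 * (2*π - k₀)^2 := by linarith
    have hB : k₀^2 ≤ (2*π - k₀)^2 :=
      le_of_mul_le_mul_left hA (by positivity)
    nlinarith [Real.pi_pos]
  · -- k₀ = π : derivative argument
    rw [← heq] at hroot
    set g : ℝ → ℝ := fun k => -cs^2 * k^2 + 8 - 10 * Real.cos k + 2 * Real.cos (2*k) with hg
    have h1 : HasDerivAt (fun k : ℝ => k^2) (2*π) π := by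
      simpa using hasDerivAt_pow 2 π
    have h2 : HasDerivAt Real.cos (-Real.sin π) π := Real.hasDerivAt_cos π
    have h3 : HasDerivAt (fun k : ℝ => Real.cos (2*k)) (-Real.sin (2*π) * 2) π := by
      have h' := (Real.hasDerivAt_cos (2*π)).comp π ((hasDerivAt_id π).const_mul 2)
      have he : (Real.cos ∘ fun y : ℝ => 2 * y) = fun k : ℝ => Real.cos (2*k) := rfl
      rw [he] at h'
      rw [mul_one] at h'
      exact h'
    have hd : HasDerivAt g (-cs^2 * (2*π) + 8 * 0 - 10 * (-Real.sin π) + 2 * (-Real.sin (2*π) * 2)) π := by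
      have := (((h1.const_mul (-cs^2)).add_const 8).sub (h2.const_mul 10)).add (h3.const_mul 2)
      have e : -cs^2 * (2*π) + 8 * 0 - 10 * (-Real.sin π) + 2 * (-Real.sin (2*π) * 2) = -cs ^ 2 * (2 * π) - 10 * -Real.sin π + 2 * (-Real.sin (2 * π) * 2) := by ring
      rw [e]
      exact this
    have hmax : IsLocalMax g π := by
      refine Filter.Eventually.of_forall (fun x => ?_)
      have hgpi : g π = 0 := hroot
      rw [hgpi]; exact hle x
    have hzero : deriv g π = 0 := hmax.deriv_eq_zero
    rw [hd.deriv, Real.sin_pi, Real.sin_two_pi] at hzero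
    nlinarith [Real.pi_pos]
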